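/- (Second part of Lemma 4.7.) For ε > 0 define g_ε : ℝ² → [0,∞) by g_ε(y) = ε · ( |y| · log(1/|y|) · log(log(1/|y|)) )⁻¹ when 0 < |y| < e⁻², and g_ε(y) = 0 otherwise. Then the function y ↦ ( |y|² · log(1/|y|) · (log(log(1/|y|)))² )⁻¹ is Lebesgue integrable over the punctured disc { y ∈ ℝ² : 0 < |y| < e⁻² }, and consequently ∫_{ℝ²} g_ε(y)² · log(1/|y|) dy → 0 as ε → 0⁺. -/

import Mathlib

open MeasureTheory Set Filter
open scoped ENNReal Real Topology

noncomputable section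

/-- The plane `ℝ²` as a Euclidean space. -/
abbrev E2 : Type := EuclideanSpace ℝ (Fin 2)

open Metric in
lemma lintegral_norm_e2 (G : ℝ → ℝ≥0∞) (hG : Measurable G) :
    ∫⁻ y : E2, G ‖y‖ =
      (volume : Measure E2).toSphere univ * ∫⁻ r in Ioi (0:ℝ), ENNReal.ofReal r * G r := by
  have hns : MeasurableSet ({0}ᶜ : Set E2) := (measurableSet_singleton _).compl
  have key := (Measure.measurePreserving_homeomorphUnitSphereProd
      (volume : Measure E2)).lintegral_comp_emb
      (Homeomorph.measurableEmbedding _) (fun p => G p.2)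
  calc ∫⁻ y : E2, G ‖y‖ = ∫⁻ y in ({0}ᶜ : Set E2), G ‖y‖ := by
        rw [restrict_compl_singleton]
    _ = ∫⁻ x : ({0}ᶜ : Set E2), G ‖x.1‖ ∂(volume.comap Subtype.val) :=
        (lintegral_subtype_comap hns _).symm
    _ = ∫⁻ p : sphere (0:E2) 1 × Ioi (0:ℝ), G p.2
          ∂((volume : Measure E2).toSphere.prod
            (Measure.volumeIoiPow (Module.finrank ℝ E2 - 1))) := by
        rw [← key]; simp
    _ = (volume : Measure E2).toSphere univ * ∫⁻ r : Ioi (0:ℝ), G r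
          ∂(Measure.volumeIoiPow (Module.finrank ℝ E2 - 1)) := by
        rw [lintegral_prod (fun p : sphere (0:E2) 1 × Ioi (0:ℝ) => G p.2)
          ((hG.comp (measurable_subtype_coe.comp measurable_snd)).aemeasurable)]
        simp [lintegral_const]
        ring
    _ = (volume : Measure E2).toSphere univ * ∫⁻ r in Ioi (0:ℝ), ENNReal.ofReal r * G r := by
        congr 1
        rw [Measure.volumeIoiPow,
          lintegral_withDensity_eq_lintegral_mul _
            ((measurable_subtype_coe.pow_const _).ennreal_ofReal)
            (show Measurable fun r : Ioi (0:ℝ) => G ↑r from hG.comp measurable_subtype_coe),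
          ← lintegral_subtype_comap measurableSet_Ioi
            (fun r : ℝ => ENNReal.ofReal r * G r)]
        have : Module.finrank ℝ E2 - 1 = 1 := by
          rw [finrank_euclideanSpace_fin]
        rw [this]
        simp [Pi.mul_apply]

lemma log_facts {x : ℝ} (h0 : 0 < x) (ha : x < Real.exp (-2)) :
    2 < Real.log (1/x) ∧ 0 < Real.log (Real.log (1/x)) := by
  have h1 : Real.log x < -2 := by
    calc Real.log x < Real.log (Real.exp (-2)) := Real.log_lt_log h0 ha
    _ = -2 := Real.log_exp _
  have h2 : 2 < Real.log (1/x) := by rw [one_div, Real.log_inv]; linarith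
  exact ⟨h2, Real.log_pos (by linarith)⟩

lemma oneDim : IntegrableOn
    (fun r : ℝ => (r * Real.log (1/r) * (Real.log (Real.log (1/r)))^2)⁻¹)
    (Ioc 0 (Real.exp (-2))) volume := by
  set a := Real.exp (-2) with ha
  have hderiv : ∀ x ∈ Ioo (0:ℝ) a,
      HasDerivAt (fun r : ℝ => (Real.log (Real.log (1/r)))⁻¹)
        ((x * Real.log (1/x) * (Real.log (Real.log (1/x)))^2)⁻¹) x := by
    intro x hx
    obtain ⟨hL, hLL⟩ := log_facts hx.1 hx.2
    have hx0 : x ≠ 0 := hx.1.ne'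
    have hLne : Real.log (1/x) ≠ 0 := by linarith
    have hLLne : Real.log (Real.log (1/x)) ≠ 0 := hLL.ne'
    have h1 : HasDerivAt (fun r : ℝ => 1/r) (-(x^2)⁻¹) x := by
      simpa [one_div] using hasDerivAt_inv hx0
    have h2 : HasDerivAt (fun r : ℝ => Real.log (1/r)) ((1/x)⁻¹ * -(x^2)⁻¹) x :=
      (Real.hasDerivAt_log (by positivity)).comp x h1
    have h3 : HasDerivAt (fun r : ℝ => Real.log (Real.log (1/r)))
        ((Real.log (1/x))⁻¹ * ((1/x)⁻¹ * -(x^2)⁻¹)) x :=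
      by have := (Real.hasDerivAt_log hLne).comp x h2; exact this
    have h4 := h3.fun_inv hLLne
    convert! h4 using 1
    field_simp
  have hpos : ∀ x ∈ Ioo (0:ℝ) a,
      0 ≤ (x * Real.log (1/x) * (Real.log (Real.log (1/x)))^2)⁻¹ := by
    intro x hx
    obtain ⟨hL, hLL⟩ := log_facts hx.1 hx.2
    have := hx.1
    positivity
  have hcont : ContinuousOn (fun r : ℝ => (Real.log (Real.log (1/r)))⁻¹) (Icc 0 a) := by
    intro x hx
    rcases eq_or_lt_of_le hx.1 with h | h
    · subst h
      rw [ContinuousWithinAt, show (Real.log (Real.log (1/(0:ℝ))))⁻¹ = 0 by norm_num]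
      have h1 : Tendsto (fun r : ℝ => (Real.log (Real.log (1/r)))⁻¹) (𝓝[>] 0) (𝓝 0) := by
        have : Tendsto (fun r : ℝ => Real.log (Real.log (1/r))) (𝓝[>] 0) atTop := by
          refine Real.tendsto_log_atTop.comp (Real.tendsto_log_atTop.comp ?_)
          have := tendsto_inv_nhdsGT_zero (𝕜 := ℝ)
          refine this.congr fun r => ?_
          rw [one_div]
        exact this.inv_tendsto_atTop
      refine Tendsto.mono_left ?_ (nhdsWithin_mono _ (Icc_subset_Ici_self))
      have : Ici (0:ℝ) = insert 0 (Ioi 0) := by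
        ext y; simp [le_iff_lt_or_eq, or_comm, eq_comm]
      rw [this, nhdsWithin_insert, tendsto_sup]
      exact ⟨by simpa using tendsto_pure_nhds (fun r : ℝ => (Real.log (Real.log (1/r)))⁻¹) 0, h1⟩
    · obtain ⟨hL2, hLL⟩ : 2 ≤ Real.log (1/x) ∧ 0 < Real.log (Real.log (1/x)) := by
        rcases eq_or_lt_of_le hx.2 with h2 | h2
        · rw [h2]; constructor
          · rw [one_div, ← Real.log_exp 2, Real.log_inv, ha, Real.log_exp]; norm_num
          · apply Real.log_pos
            rw [ha, one_div, ← Real.exp_neg, Real.log_exp]; norm_num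
        · have := log_facts h h2; exact ⟨this.1.le, this.2⟩
      have c1 : ContinuousAt (fun r : ℝ => 1/r) x := by
        simpa [one_div] using continuousAt_inv₀ h.ne'
      have c2 : ContinuousAt (fun r : ℝ => Real.log (1/r)) x :=
        (Real.continuousAt_log (by positivity)).comp c1
      have c3 : ContinuousAt (fun r : ℝ => Real.log (Real.log (1/r))) x :=
        (Real.continuousAt_log (by linarith)).comp c2
      exact (c3.inv₀ hLL.ne').continuousWithinAt
  exact intervalIntegral.integrableOn_deriv_of_nonneg hcont hderiv hpos

/-- The radial profile of the integrand, cut off outside the punctured disc. -/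
def Faux : ℝ → ℝ := fun r =>
  if 0 < r ∧ r < Real.exp (-2) then
    (r^2 * Real.log (1/r) * (Real.log (Real.log (1/r)))^2)⁻¹ else 0

lemma Faux_meas : Measurable Faux := by
  have : MeasurableSet {r : ℝ | 0 < r ∧ r < Real.exp (-2)} :=
    measurableSet_Ioo (a := (0:ℝ)) (b := Real.exp (-2))
  exact Measurable.ite this (by measurability) measurable_const

lemma Faux_nonneg (r : ℝ) : 0 ≤ Faux r := by
  rw [Faux]
  split_ifs with h
  · obtain ⟨hL, hLL⟩ := log_facts h.1 h.2
    have := h.1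
    positivity
  · exact le_refl _

lemma Faux_lintegral_lt_top : ∫⁻ y : E2, ENNReal.ofReal (Faux ‖y‖) < ⊤ := by
  rw [lintegral_norm_e2 _ Faux_meas.ennreal_ofReal]
  refine ENNReal.mul_lt_top (measure_lt_top _ _) ?_
  set a := Real.exp (-2)
  set φ : ℝ → ℝ := fun r => (r * Real.log (1/r) * (Real.log (Real.log (1/r)))^2)⁻¹ with hφ
  have heq : ∀ r ∈ Ioi (0:ℝ), ENNReal.ofReal r * ENNReal.ofReal (Faux r) =
      (Ioo (0:ℝ) a).indicator (fun r => ENNReal.ofReal (φ r)) r := by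
    intro r hr
    have hr0 : (0:ℝ) < r := hr
    by_cases h : r < a
    · have hmem : r ∈ Ioo (0:ℝ) a := ⟨hr0, h⟩
      rw [indicator_of_mem hmem, Faux, if_pos ⟨hr0, h⟩, ← ENNReal.ofReal_mul hr0.le]
      congr 1
      have hr2 : r^2 * Real.log (1/r) * (Real.log (Real.log (1/r)))^2
          = r * (r * Real.log (1/r) * (Real.log (Real.log (1/r)))^2) := by ring
      rw [hφ, hr2, mul_inv, ← mul_assoc, mul_inv_cancel₀ hr0.ne', one_mul]
    · have hmem : r ∉ Ioo (0:ℝ) a := fun hm => h hm.2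
      rw [indicator_of_notMem hmem, Faux, if_neg (fun hc => h hc.2)]
      simp
  rw [setLIntegral_congr_fun measurableSet_Ioi heq,
    lintegral_indicator measurableSet_Ioo, Measure.restrict_restrict measurableSet_Ioo]
  have hinter : Ioo (0:ℝ) a ∩ Ioi 0 = Ioo 0 a := inter_eq_left.mpr Ioo_subset_Ioi_self
  rw [hinter]
  calc ∫⁻ r in Ioo (0:ℝ) a, ENNReal.ofReal (φ r)
      ≤ ∫⁻ r in Ioc (0:ℝ) a, ‖φ r‖ₑ :=
        lintegral_mono' (Measure.restrict_mono Ioo_subset_Ioc_self le_rfl)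
          (fun r => Real.ofReal_le_enorm _)
    _ < ⊤ := oneDim.2

theorem g_eps_weighted_L2_tendsto_zero
    (g : ℝ → E2 → ℝ)
    (hg : ∀ (ε : ℝ) (y : E2), g ε y =
      if 0 < ‖y‖ ∧ ‖y‖ < Real.exp (-2) then
        ε * (‖y‖ * Real.log (1 / ‖y‖) * Real.log (Real.log (1 / ‖y‖)))⁻¹
      else 0) :
    IntegrableOn
      (fun y : E2 =>
        (‖y‖ ^ 2 * Real.log (1 / ‖y‖) * (Real.log (Real.log (1 / ‖y‖))) ^ 2)⁻¹)
      {y : E2 | 0 < ‖y‖ ∧ ‖y‖ < Real.exp (-2)} volume ∧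
    Tendsto (fun ε : ℝ =>
        ∫⁻ y : E2, ENNReal.ofReal ((g ε y) ^ 2 * Real.log (1 / ‖y‖)))
      (𝓝[>] 0) (𝓝 0) := by
  have hS : MeasurableSet {y : E2 | 0 < ‖y‖ ∧ ‖y‖ < Real.exp (-2)} := by
    have : {y : E2 | 0 < ‖y‖ ∧ ‖y‖ < Real.exp (-2)} =
        (fun y : E2 => ‖y‖) ⁻¹' (Ioo 0 (Real.exp (-2))) := rfl
    rw [this]
    exact measurable_norm measurableSet_Ioo
  have hind : ({y : E2 | 0 < ‖y‖ ∧ ‖y‖ < Real.exp (-2)}).indicator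
      (fun y : E2 =>
        (‖y‖ ^ 2 * Real.log (1 / ‖y‖) * (Real.log (Real.log (1 / ‖y‖))) ^ 2)⁻¹) =
      fun y : E2 => Faux ‖y‖ := by
    funext y
    rw [Set.indicator_apply, Faux]
    rfl
  constructor
  · refine (integrable_indicator_iff hS).mp ?_
    rw [hind]
    refine ⟨(Faux_meas.comp measurable_norm).aestronglyMeasurable, ?_⟩
    simp only [HasFiniteIntegral]
    have : ∀ y : E2, ‖Faux ‖y‖‖ₑ = ENNReal.ofReal (Faux ‖y‖) :=
      fun y => Real.enorm_eq_ofReal (Faux_nonneg _)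
    simp only [this]
    exact Faux_lintegral_lt_top
  · have hpt : ∀ (ε : ℝ) (y : E2),
        (g ε y)^2 * Real.log (1/‖y‖) = ε^2 * Faux ‖y‖ := by
      intro ε y
      rw [hg, Faux]
      by_cases h : 0 < ‖y‖ ∧ ‖y‖ < Real.exp (-2)
      · rw [if_pos h, if_pos h]
        obtain ⟨hL, hLL⟩ := log_facts h.1 h.2
        have hn : ‖y‖ ≠ 0 := h.1.ne'
        have hLne : Real.log (1/‖y‖) ≠ 0 := by linarith
        have hLLne : Real.log (Real.log (1/‖y‖)) ≠ 0 := hLL.ne'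
        field_simp
      · rw [if_neg h, if_neg h]
        simp
    have hint : ∀ ε : ℝ, ∫⁻ y : E2, ENNReal.ofReal ((g ε y)^2 * Real.log (1/‖y‖)) =
        ENNReal.ofReal (ε^2) * ∫⁻ y : E2, ENNReal.ofReal (Faux ‖y‖) := by
      intro ε
      simp only [hpt, ENNReal.ofReal_mul (sq_nonneg ε)]
      rw [lintegral_const_mul _ (show Measurable fun y : E2 => ENNReal.ofReal (Faux ‖y‖) from
        (Faux_meas.comp measurable_norm).ennreal_ofReal)]
    simp only [hint]
    have h0 : Tendsto (fun ε : ℝ => ENNReal.ofReal (ε^2)) (𝓝[>] 0) (𝓝 0) := by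
      have h1 : Tendsto (fun ε : ℝ => ε^2) (𝓝 0) (𝓝 0) := by
        simpa using (continuous_pow 2).tendsto (0:ℝ)
      have := (ENNReal.continuous_ofReal.tendsto 0).comp (h1.mono_left (nhdsWithin_le_nhds (s := Ioi (0:ℝ))))
      simpa [Function.comp_def] using this
    have := ENNReal.Tendsto.mul_const h0 (Or.inr Faux_lintegral_lt_top.ne)
    simpa using this
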